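/- Let q⋆ be an optimal k-points NN quantizer for P with codebook c⋆ = {c⋆₁,…,c⋆_k}, let q be a k-points NN quantizer with codebook c = {c₁,…,c_k}, and set m = min_{i≠j} |c⋆_i − c⋆_j|. Assume the identity permutation attains the minimum in the definition of F₁(q⋆,q). Then for all i ≠ j, V_i(c⋆) ∩ V_j(c) ⊆ {x ∈ E : m·d(x, ∂V_i(c⋆)) ≤ 2|x − q⋆(x)|·F₁(q⋆,q) + 2F₁(q⋆,q)²}, where ∂V_i(c⋆) denotes the topological boundary of V_i(c⋆). -/

import Mathlib

open MeasureTheory Metric Set ENNReal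

noncomputable section

variable {E : Type*} [NormedAddCommGroup E] [InnerProductSpace ℝ E] [MeasurableSpace E]

/-- A `k`-points nearest-neighbor quantizer: a Borel-measurable map whose image is a set of
exactly `k` points and which maps every point to a nearest point of its codebook. -/
def IsNNQuantizer (k : ℕ) (q : E → E) : Prop :=
  Measurable q ∧ (∃ s : Finset E, s.card = k ∧ Set.range q = ↑s) ∧
    ∀ x : E, ∀ c ∈ Set.range q, ‖x - q x‖ ≤ ‖x - c‖

/-- The risk (distortion) of a quantizer with respect to `P`. -/
def risk (P : Measure E) (q : E → E) : ℝ := ∫ x, ‖x - q x‖ ^ 2 ∂P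

/-- An optimal `k`-points NN quantizer for `P`. -/
def IsOptimalQuantizer (P : Measure E) (k : ℕ) (q : E → E) : Prop :=
  IsNNQuantizer k q ∧ ∀ q', IsNNQuantizer k q' → risk P q ≤ risk P q'

/-- The absolute margin condition with parameter `l0` (with respect to the optimal quantizer
`qs`):  (1) the set `A(l0)` has full `P`-measure; (2) for every random variable `Y`
(encoded by a coupling `π` of the law `P` of `X` and the law of `Y`) with
`E|X - Y|² ≤ l0² E|X - qs X|²`, the map `q ↦ E|Y - q Y|²` over `k`-points NN quantizers has a
unique minimizer (uniqueness of its codebook). -/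
def AbsoluteMargin (P : Measure E) (k : ℕ) (qs : E → E) (l0 : ℝ) : Prop :=
  P {x | qs (x + l0 • (x - qs x)) = qs x} = 1 ∧
  ∀ π : Measure (E × E), IsProbabilityMeasure π → π.map Prod.fst = P →
    (∫ p, ‖p.1 - p.2‖ ^ 2 ∂π) ≤ l0 ^ 2 * ∫ x, ‖x - qs x‖ ^ 2 ∂P →
    ∃ q0, IsNNQuantizer k q0 ∧
      (∀ q', IsNNQuantizer k q' → risk (π.map Prod.snd) q0 ≤ risk (π.map Prod.snd) q') ∧
      ∀ q', IsNNQuantizer k q' →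
        (∀ q'', IsNNQuantizer k q'' → risk (π.map Prod.snd) q' ≤ risk (π.map Prod.snd) q'') →
        Set.range q' = Set.range q0

/-- Voronoi cell of the `j`-th point of the codebook `c`. -/
def Vcell (k : ℕ) (c : Fin k → E) (j : Fin k) : Set E := {x | ∀ l, ‖x - c j‖ ≤ ‖x - c l‖}

/-- The frontier of the Voronoi diagram generated by `c`. -/
def VorFrontier (k : ℕ) (c : Fin k → E) : Set E :=
  ⋃ (i) (j) (_ : i ≠ j), Vcell k c i ∩ Vcell k c j

/-- `F₁` between two codebooks: min over permutations of the max distance of matched centers. -/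
def F1 (k : ℕ) (c c' : Fin k → E) : ℝ :=
  ⨅ σ : Equiv.Perm (Fin k), ⨆ j, ‖c j - c' (σ j)‖

/-- `F₂` between two codebooks: the minimal `P`-mass of misclassified points. -/
def F2 (P : Measure E) (k : ℕ) (c c' : Fin k → E) : ℝ :=
  ⨅ σ : Equiv.Perm (Fin k), (P (⋃ j, Vcell k c j ∩ Vcell k c' (σ j))ᶜ).toReal

/-- `max_{i ≠ j} ‖c i - c j‖`. -/
def maxDist (k : ℕ) (c : Fin k → E) : ℝ :=
  ⨆ p : {p : Fin k × Fin k // p.1 ≠ p.2}, ‖c p.1.1 - c p.1.2‖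

/-- `min_{i ≠ j} ‖c i - c j‖`. -/
def minDist (k : ℕ) (c : Fin k → E) : ℝ :=
  ⨅ p : {p : Fin k × Fin k // p.1 ≠ p.2}, ‖c p.1.1 - c p.1.2‖

/-- The function `p⋆(t)` of Definition `def:pstar`, for the optimal codebook `cs` of the
optimal quantizer `qs`. -/
def pstar (P : Measure E) (k : ℕ) (cs : Fin k → E) (qs : E → E) (t : ℝ) : ℝ :=
  (P (⋃ i, {x | minDist k cs * infDist x (frontier (Vcell k cs i)) ≤
      2 * ‖x - qs x‖ * t + 2 * t ^ 2})).toReal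

/-- `F₁` between two quantizers, defined through enumerations of their codebooks. -/
def F1Q (k : ℕ) (q q' : E → E) : ℝ :=
  sInf {r | ∃ c c' : Fin k → E, Set.range c = Set.range q ∧ Set.range c' = Set.range q' ∧
    r = ⨆ j, ‖c j - c' j‖}

/-- the key inclusion in the proof of Proposition `thm:pstar`: misclassified cells
lie in an inflated neighborhood of the boundary of the optimal Voronoi cells. -/

lemma preconn_frontier {X : Type*} [TopologicalSpace X] {s t : Set X}
    (hs : IsPreconnected s) {a b : X} (ha : a ∈ s) (hat : a ∈ t) (hb : b ∈ s) (hbt : b ∉ t) :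
    (s ∩ frontier t).Nonempty := by
  by_contra h
  rw [Set.not_nonempty_iff_eq_empty] at h
  have hfr : ∀ x ∈ s, x ∉ frontier t := fun x hx hf => by
    have : x ∈ s ∩ frontier t := ⟨hx, hf⟩
    simp [h] at this
  have hsub : s ⊆ interior t ∪ (closure t)ᶜ := by
    intro x hx
    by_cases hc : x ∈ closure t
    · left
      by_contra hi
      exact hfr x hx ⟨hc, hi⟩
    · right; exact hc
  have hau : a ∈ interior t := by
    by_contra hi
    exact hfr a ha ⟨subset_closure hat, hi⟩
  have hbv : b ∈ (closure t)ᶜ := by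
    intro hc
    exact hfr b hb ⟨hc, fun hi => hbt (interior_subset hi)⟩
  obtain ⟨x, _, hx1, hx2⟩ := hs (interior t) (closure t)ᶜ isOpen_interior
    isClosed_closure.isOpen_compl hsub ⟨a, ha, hau⟩ ⟨b, hb, hbv⟩
  exact hx2 (subset_closure (interior_subset hx1))

set_option maxHeartbeats 1000000 in
theorem stmt19 [BorelSpace E] [CompleteSpace E] [SecondCountableTopology E]
    (P : Measure E) [IsProbabilityMeasure P] (k : ℕ) (hk : 1 ≤ k)
    (hmom : Integrable (fun x => ‖x‖ ^ 2) P)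
    (hsupp : ∀ s : Finset E, s.card ≤ k → P (↑s : Set E) < 1)
    (qs q : E → E) (cs c : Fin k → E)
    (hcs_inj : Function.Injective cs) (hc_inj : Function.Injective c)
    (hcs_range : Set.range qs = Set.range cs) (hc_range : Set.range q = Set.range c)
    (hqs : IsOptimalQuantizer P k qs) (hq : IsNNQuantizer k q)
    (hF1id : F1 k cs c = ⨆ j, ‖cs j - c j‖)
    (i j : Fin k) (hij : i ≠ j) :
    Vcell k cs i ∩ Vcell k c j ⊆
      {x | minDist k cs * infDist x (frontier (Vcell k cs i)) ≤
        2 * ‖x - qs x‖ * F1 k cs c + 2 * F1 k cs c ^ 2} := by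
  rintro x ⟨hxi, hxj⟩
  simp only [Set.mem_setOf_eq]
  have hFle : ∀ l, ‖cs l - c l‖ ≤ F1 k cs c := by
    intro l
    rw [hF1id]
    exact le_ciSup (f := fun l => ‖cs l - c l‖) (Finite.bddAbove_range _) l
  obtain ⟨F, hF⟩ : ∃ F, F = F1 k cs c := ⟨_, rfl⟩
  rw [← hF] at hFle ⊢
  clear hF
  have hF0 : 0 ≤ F := le_trans (norm_nonneg _) (hFle i)
  have hxii : ∀ l, ‖x - cs i‖ ≤ ‖x - cs l‖ := hxi
  have hxjj : ‖x - c j‖ ≤ ‖x - c i‖ := hxj i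
  have h1 : ‖x - cs j‖ ≤ ‖x - cs i‖ + 2 * F := by
    have t1 : ‖x - cs j‖ ≤ ‖x - c j‖ + ‖c j - cs j‖ := by
      have := norm_add_le (x - c j) (c j - cs j)
      simpa using this
    have t2 : ‖x - c i‖ ≤ ‖x - cs i‖ + ‖cs i - c i‖ := by
      have := norm_add_le (x - cs i) (cs i - c i)
      simpa using this
    have t3 : ‖c j - cs j‖ ≤ F := by rw [norm_sub_rev]; exact hFle j
    linarith [hFle i, hxjj]
  obtain ⟨v, hv⟩ : ∃ v, v = cs j - cs i := ⟨_, rfl⟩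
  have hvne : v ≠ 0 := hv ▸ sub_ne_zero.2 fun h => hij (hcs_inj h.symm)
  obtain ⟨w, hw⟩ : ∃ w, w = ‖v‖ := ⟨_, rfl⟩
  have hw0 : 0 < w := hw ▸ norm_pos_iff.2 hvne
  have hwne : w ≠ 0 := hw0.ne'
  obtain ⟨Δ, hΔ⟩ : ∃ D, D = ‖x - cs j‖ ^ 2 - ‖x - cs i‖ ^ 2 := ⟨_, rfl⟩
  have hΔ0 : 0 ≤ Δ := by
    rw [hΔ]
    have := hxii j
    nlinarith [norm_nonneg (x - cs i), norm_nonneg (x - cs j)]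
  obtain ⟨t, ht⟩ : ∃ t : ℝ, t = Δ / (2 * w ^ 2) := ⟨_, rfl⟩
  have ht0 : 0 ≤ t := by rw [ht]; exact div_nonneg hΔ0 (by nlinarith [hw0])
  have h2tw : 2 * t * w ^ 2 = Δ := by
    rw [ht]; field_simp
  have htw : t * w = Δ / (2 * w) := by
    rw [ht]; field_simp
  have hinf : infDist x (frontier (Vcell k cs i)) ≤ Δ / (2 * w) := by
    refine le_of_forall_pos_le_add ?_
    intro ε hε
    obtain ⟨s, hs⟩ : ∃ s : ℝ, s = t + ε / w := ⟨_, rfl⟩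
    have hs0 : 0 < s := by
      have := div_pos hε hw0
      rw [hs]; linarith
    obtain ⟨p, hp⟩ : ∃ p : E, p = x + s • v := ⟨_, rfl⟩
    have e1 : p - cs j = (x - cs j) + s • v := by rw [hp]; abel
    have e2 : p - cs i = (x - cs i) + s • v := by rw [hp]; abel
    have key : ‖p - cs j‖ ^ 2 = ‖p - cs i‖ ^ 2 + Δ - 2 * s * w ^ 2 := by
      rw [e1, e2, norm_add_sq_real, norm_add_sq_real, real_inner_smul_right,
        real_inner_smul_right]
      have hin : inner ℝ (x - cs j) v - inner ℝ (x - cs i) v = (-(w ^ 2) : ℝ) := by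
        rw [← inner_sub_left]
        have h4 : (x - cs j) - (x - cs i) = -v := by rw [hv]; abel
        rw [h4, inner_neg_left, real_inner_self_eq_norm_sq, hw]
      rw [hΔ]; nlinarith [hin]
    have hsww : 2 * s * w ^ 2 = Δ + 2 * ε * w := by
      calc 2 * s * w ^ 2 = 2 * t * w ^ 2 + 2 * (ε / w * w) * w := by rw [hs]; ring
        _ = Δ + 2 * ε * w := by rw [h2tw, div_mul_cancel₀ ε hwne]
    have hlt : ‖p - cs j‖ ^ 2 < ‖p - cs i‖ ^ 2 := by
      rw [key, hsww]
      nlinarith [hw0, hε]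
    have hlt' : ‖p - cs j‖ < ‖p - cs i‖ := lt_of_pow_lt_pow_left₀ 2 (norm_nonneg _) hlt
    have hpnot : p ∉ Vcell k cs i := fun hpV => absurd (hpV j) (not_le.2 hlt')
    obtain ⟨y, hyseg, hyfr⟩ := preconn_frontier (convex_segment x p).isPreconnected
      (left_mem_segment ℝ x p) hxi (right_mem_segment ℝ x p) hpnot
    have hdy : dist x y ≤ dist x p := by
      have := dist_add_dist_of_mem_segment hyseg
      have h0 : (0:ℝ) ≤ dist y p := dist_nonneg
      linarith
    have hdp : dist x p = s * w := by
      rw [hp, dist_eq_norm]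
      simp [norm_smul, abs_of_pos hs0, hw]
    have hsw : s * w = Δ / (2 * w) + ε := by
      rw [hs, add_mul, htw, div_mul_cancel₀ ε hwne]
    calc infDist x (frontier (Vcell k cs i)) ≤ dist x y := infDist_le_dist_of_mem hyfr
      _ ≤ dist x p := hdy
      _ = Δ / (2 * w) + ε := by rw [hdp, hsw]
  obtain ⟨m, hm⟩ : ∃ m, m = minDist k cs := ⟨_, rfl⟩
  rw [← hm]
  have hmd : m ≤ w := by
    rw [hm]
    have hbd : BddBelow (Set.range fun p : {p : Fin k × Fin k // p.1 ≠ p.2} =>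
        ‖cs p.1.1 - cs p.1.2‖) := ⟨0, by rintro r ⟨p, rfl⟩; exact norm_nonneg _⟩
    have := ciInf_le hbd ⟨(j, i), fun h => hij h.symm⟩
    rw [hw, hv]
    simpa [minDist] using this
  haveI : Nonempty {p : Fin k × Fin k // p.1 ≠ p.2} := ⟨⟨(i, j), hij⟩⟩
  have hmd0 : 0 ≤ m := by rw [hm]; exact le_ciInf fun p => norm_nonneg _
  clear hm
  have hΔle : Δ / 2 ≤ 2 * ‖x - cs i‖ * F + 2 * F ^ 2 := by
    rw [hΔ]
    have hsq : ‖x - cs j‖ ^ 2 ≤ (‖x - cs i‖ + 2 * F) ^ 2 :=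
      pow_le_pow_left₀ (norm_nonneg _) h1 2
    have hsq2 : (‖x - cs i‖ + 2 * F) ^ 2
        = ‖x - cs i‖ ^ 2 + 4 * ‖x - cs i‖ * F + 4 * F ^ 2 := by ring
    linarith [hsq, hsq2]
  have hqsle : ‖x - cs i‖ ≤ ‖x - qs x‖ := by
    have hmem : qs x ∈ Set.range cs := hcs_range ▸ Set.mem_range_self x
    obtain ⟨l, hl⟩ := hmem
    rw [← hl]
    exact hxii l
  have hid0 : 0 ≤ infDist x (frontier (Vcell k cs i)) := infDist_nonneg
  calc m * infDist x (frontier (Vcell k cs i))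
      ≤ w * infDist x (frontier (Vcell k cs i)) := by nlinarith
    _ ≤ w * (Δ / (2 * w)) := by nlinarith
    _ = Δ / 2 := by field_simp
    _ ≤ 2 * ‖x - cs i‖ * F + 2 * F ^ 2 := hΔle
    _ ≤ 2 * ‖x - qs x‖ * F + 2 * F ^ 2 := by nlinarith
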